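/- Let U be a unitary on (ℂ²)^{⊗n} and suppose |μ⟩ is a unit vector with U|μ⟩ = |μ⟩. Define V = CSWAP_{C,T,A} · (I_C ⊗ I_T ⊗ U_A) · CSWAP_{C,T,A}, where CSWAP swaps registers T and A controlled on qubit C. Then for every |φ⟩ ∈ ℂ² ⊗ (ℂ²)^{⊗n}, V(|φ⟩ ⊗ |μ⟩) = ((|0⟩⟨0| ⊗ I + |1⟩⟨1| ⊗ U)|φ⟩) ⊗ |μ⟩. -/
import Mathlib


/-- States on control ⊗ target ⊗ ancilla (`Bool × {0,1}ⁿ × {0,1}ⁿ`) are functions to `ℂ`.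
`CSWAP` swaps the target and ancilla registers controlled on the control qubit. -/
noncomputable def CSWAP (n : ℕ)
    (g : Bool × (Fin n → Bool) × (Fin n → Bool) → ℂ) :
    Bool × (Fin n → Bool) × (Fin n → Bool) → ℂ :=
  fun p => if p.1 then g (p.1, p.2.2, p.2.1) else g p

/-- `I ⊗ I ⊗ U`: apply `U` to the ancilla register. -/
noncomputable def applyOnAncilla (n : ℕ)
    (U : ((Fin n → Bool) → ℂ) →ₗ[ℂ] ((Fin n → Bool) → ℂ))
    (g : Bool × (Fin n → Bool) × (Fin n → Bool) → ℂ) :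
    Bool × (Fin n → Bool) × (Fin n → Bool) → ℂ :=
  fun p => U (fun a => g (p.1, p.2.1, a)) p.2.2

/-- Controlled-`U`: `|0⟩⟨0| ⊗ I + |1⟩⟨1| ⊗ U` on control ⊗ target. -/
noncomputable def controlledU (n : ℕ)
    (U : ((Fin n → Bool) → ℂ) →ₗ[ℂ] ((Fin n → Bool) → ℂ))
    (g : Bool × (Fin n → Bool) → ℂ) : Bool × (Fin n → Bool) → ℂ :=
  fun p => if p.1 then U (fun t => g (true, t)) p.2 else g p

/-- If `U` is a unitary on `n` qubits and `μ` is a unit vector fixed by `U`, then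
`V = CSWAP ∘ (I⊗I⊗U) ∘ CSWAP` implements controlled-`U` on the first two registers
while leaving the ancilla `μ` undisturbed: `V(φ ⊗ μ) = (controlled-U φ) ⊗ μ`. -/
theorem stmt_11 (n : ℕ)
    (U : ((Fin n → Bool) → ℂ) →ₗ[ℂ] ((Fin n → Bool) → ℂ))
    (hU : ∀ f, ∑ x, ‖U f x‖ ^ 2 = ∑ x, ‖f x‖ ^ 2)
    (μ : (Fin n → Bool) → ℂ) (hμn : ∑ x, ‖μ x‖ ^ 2 = 1) (hμ : U μ = μ)
    (φ : Bool × (Fin n → Bool) → ℂ) :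
    CSWAP n (applyOnAncilla n U (CSWAP n (fun p => φ (p.1, p.2.1) * μ p.2.2)))
      = fun p => controlledU n U φ (p.1, p.2.1) * μ p.2.2 := by
  funext p
  obtain ⟨c, t, a⟩ := p
  cases c
  · show U (fun a' => φ (false, t) * μ a') a = controlledU n U φ (false, t) * μ a
    have h : (fun a' => φ (false, t) * μ a') = φ (false, t) • μ := rfl
    rw [h, map_smul, hμ]
    rfl
  · show U (fun x => φ (true, x) * μ a) t = controlledU n U φ (true, t) * μ a
    have h : (fun x => φ (true, x) * μ a) = μ a • (fun x => φ (true, x)) := by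
      funext x; simp [mul_comm]
    rw [h, map_smul]
    show μ a * U (fun x => φ (true, x)) t = _
    rw [mul_comm]
    rfl
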